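/- For all real exponents α, β with 0 ≤ α < β ≤ 1 and α + β > 1, the supremum over a ∈ ℝ of ∫_ℝ |ξ|^{-α} ⟨ξ + a⟩^{-β} dξ is finite, where ⟨x⟩ = (1+x²)^{1/2}. -/

import Mathlib

open MeasureTheory Real ENNReal Set
set_option linter.unusedVariables false

/-- Japanese bracket `⟨x⟩ = √(1 + x²)`. -/
noncomputable def jb (x : ℝ) : ℝ := Real.sqrt (1 + x ^ 2)

lemma jb_pos (x : ℝ) : 0 < jb x := Real.sqrt_pos.2 (by positivity)

lemma one_le_jb (x : ℝ) : 1 ≤ jb x := by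
  rw [show (1:ℝ) = Real.sqrt 1 by simp]
  exact Real.sqrt_le_sqrt (by nlinarith [sq_nonneg x])

lemma abs_le_jb (x : ℝ) : |x| ≤ jb x := by
  rw [← Real.sqrt_sq_eq_abs]
  exact Real.sqrt_le_sqrt (by nlinarith)

lemma jb_mono {x y : ℝ} (h : |x| ≤ |y|) : jb x ≤ jb y := by
  apply Real.sqrt_le_sqrt
  have hx := sq_abs x
  have hy := sq_abs y
  nlinarith [abs_nonneg x, abs_nonneg y]

lemma jb_neg (x : ℝ) : jb (-x) = jb x := by simp [jb, neg_sq]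

section main
variable (α β : ℝ)

noncomputable def gg (x : ℝ) : ℝ := |x| ^ (-α) * jb x ^ (-β)

lemma gg_nonneg (x : ℝ) : 0 ≤ gg α β x :=
  mul_nonneg (Real.rpow_nonneg (abs_nonneg x) _) (Real.rpow_nonneg (jb_pos x).le _)

lemma gg_meas : Measurable fun x : ℝ => ENNReal.ofReal (gg α β x) := by
  apply ENNReal.measurable_ofReal.comp
  exact (measurable_abs.pow measurable_const).mul
    (((continuous_const.add (continuous_pow 2)).sqrt.measurable).pow measurable_const)

lemma J_lt_top (hα : 0 ≤ α) (hα1 : α < 1) (hsum : 1 < α + β) (hβ : 0 ≤ β) :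
    (∫⁻ x : ℝ, ENNReal.ofReal (gg α β x)) < ⊤ := by
  set F : ℝ → ℝ≥0∞ := fun x => ENNReal.ofReal (gg α β x) with hF
  have hFmeas : Measurable F := gg_meas α β
  -- finiteness on (0,1]
  have h1 : (∫⁻ x in Ioc (0:ℝ) 1, F x) < ⊤ := by
    have hint : IntegrableOn (fun x : ℝ => x ^ (-α)) (Ioc (0:ℝ) 1) := by
      rw [← intervalIntegrable_iff_integrableOn_Ioc_of_le zero_le_one]
      exact intervalIntegral.intervalIntegrable_rpow' (by linarith)
    have hb : ∫⁻ x in Ioc (0:ℝ) 1, F x ≤ ∫⁻ x in Ioc (0:ℝ) 1, ENNReal.ofReal (x ^ (-α)) := by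
      apply setLIntegral_mono (ENNReal.measurable_ofReal.comp (measurable_id.pow measurable_const))
      intro x hx
      apply ENNReal.ofReal_le_ofReal
      have h1 : |x| ^ (-α) = x ^ (-α) := by rw [abs_of_pos hx.1]
      calc gg α β x ≤ |x| ^ (-α) * 1 :=
            mul_le_mul_of_nonneg_left
              (Real.rpow_le_one_of_one_le_of_nonpos (one_le_jb x) (by linarith))
              (Real.rpow_nonneg (abs_nonneg x) _)
        _ = x ^ (-α) := by rw [mul_one, h1]
    exact hb.trans_lt hint.lintegral_lt_top
  -- finiteness on (1,∞)
  have h2 : (∫⁻ x in Ioi (1:ℝ), F x) < ⊤ := by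
    have hint : IntegrableOn (fun x : ℝ => x ^ (-(α + β))) (Ioi (1:ℝ)) :=
      (integrableOn_Ioi_rpow_iff zero_lt_one).2 (by linarith)
    have hb : ∫⁻ x in Ioi (1:ℝ), F x ≤ ∫⁻ x in Ioi (1:ℝ), ENNReal.ofReal (x ^ (-(α + β))) := by
      apply setLIntegral_mono (ENNReal.measurable_ofReal.comp (measurable_id.pow measurable_const))
      intro x hx
      apply ENNReal.ofReal_le_ofReal
      have hx0 : (0:ℝ) < x := lt_trans zero_lt_one hx
      have hax : |x| ^ (-α) = x ^ (-α) := by rw [abs_of_pos hx0]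
      have hj : jb x ^ (-β) ≤ x ^ (-β) :=
        Real.rpow_le_rpow_of_nonpos hx0 ((le_abs_self x).trans (abs_le_jb x)) (by linarith)
      calc gg α β x ≤ x ^ (-α) * x ^ (-β) := by
            rw [gg, hax]
            exact mul_le_mul_of_nonneg_left hj (Real.rpow_nonneg hx0.le _)
        _ = x ^ (-(α + β)) := by rw [← Real.rpow_add hx0]; ring_nf
    exact hb.trans_lt hint.lintegral_lt_top
  -- finiteness on (0,∞)
  have hpos : (∫⁻ x in Ioi (0:ℝ), F x) < ⊤ := by
    rw [← Ioc_union_Ioi_eq_Ioi (zero_le_one (α := ℝ)),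
      lintegral_union measurableSet_Ioi Ioc_disjoint_Ioi_same]
    exact ENNReal.add_lt_top.2 ⟨h1, h2⟩
  -- negative side equals positive side
  have hneg : (∫⁻ x in Iio (0:ℝ), F x) = ∫⁻ x in Ioi (0:ℝ), F x := by
    have hset : (Neg.neg ⁻¹' Iio (0:ℝ)) = Ioi 0 := by ext x; simp
    have h0 : (∫⁻ x in Iio (0:ℝ), F x) = ∫⁻ x in Ioi (0:ℝ), F (-x) := by
      conv_lhs => rw [← Measure.map_neg_eq_self (volume : Measure ℝ)]
      rw [setLIntegral_map measurableSet_Iio hFmeas measurable_neg, hset]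
    rw [h0]
    apply setLIntegral_congr_fun measurableSet_Ioi
    intro x _
    simp [hF, gg, jb_neg, abs_neg]
  have hIic : (∫⁻ x in (Ioi (0:ℝ))ᶜ, F x) = ∫⁻ x in Iio (0:ℝ), F x := by
    rw [compl_Ioi]
    exact (setLIntegral_congr Iio_ae_eq_Iic.symm)
  have hsplit : (∫⁻ x, F x) = (∫⁻ x in Ioi (0:ℝ), F x) + ∫⁻ x in (Ioi (0:ℝ))ᶜ, F x :=
    (lintegral_add_compl F measurableSet_Ioi).symm
  show (∫⁻ x, F x) < ⊤
  rw [hsplit, hIic, hneg]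
  exact ENNReal.add_lt_top.2 ⟨hpos, hpos⟩

end main

/-- `sup_{a ∈ ℝ} ∫_ℝ |ξ|^{-α} ⟨ξ + a⟩^{-β} dξ < ∞`
for `0 ≤ α < β ≤ 1` with `α + β > 1`. -/
theorem stmt6 (α β : ℝ) (hα : 0 ≤ α) (hαβ : α < β) (hβ : β ≤ 1) (hsum : 1 < α + β) :
    ∃ C : ℝ≥0∞, C ≠ ⊤ ∧ ∀ a : ℝ,
      (∫⁻ ξ : ℝ, ENNReal.ofReal (|ξ| ^ (-α) * (jb (ξ + a)) ^ (-β))) ≤ C := by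
  have hβ0 : 0 ≤ β := le_trans hα hαβ.le
  set J : ℝ≥0∞ := ∫⁻ x : ℝ, ENNReal.ofReal (gg α β x) with hJ
  have hJtop : J < ⊤ := J_lt_top α β hα (lt_of_lt_of_le hαβ hβ) hsum hβ0
  refine ⟨J + J, by simp [hJtop.ne], fun a => ?_⟩
  have hae : ∀ᵐ ξ : ℝ, ENNReal.ofReal (|ξ| ^ (-α) * (jb (ξ + a)) ^ (-β)) ≤
      ENNReal.ofReal (gg α β ξ) + ENNReal.ofReal (gg α β (ξ + a)) := by
    rw [ae_iff]
    refine measure_mono_null (fun ξ hξ => ?_)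
      (((Set.finite_singleton (-a)).insert (0:ℝ)).measure_zero volume)
    simp only [mem_setOf_eq] at hξ
    by_contra hmem
    simp only [mem_insert_iff, mem_singleton_iff, not_or] at hmem
    obtain ⟨hξ0, hξa'⟩ := hmem
    have hξa : ξ + a ≠ 0 := fun h => hξa' (by linarith)
    apply hξ
    have key : |ξ| ^ (-α) * (jb (ξ + a)) ^ (-β) ≤ gg α β ξ + gg α β (ξ + a) := by
      rcases le_total |ξ| |ξ + a| with h | h
      · have hj : jb (ξ + a) ^ (-β) ≤ jb ξ ^ (-β) :=
          Real.rpow_le_rpow_of_nonpos (jb_pos ξ) (jb_mono h) (by linarith)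
        calc |ξ| ^ (-α) * (jb (ξ + a)) ^ (-β) ≤ gg α β ξ :=
              mul_le_mul_of_nonneg_left hj (Real.rpow_nonneg (abs_nonneg ξ) _)
          _ ≤ gg α β ξ + gg α β (ξ + a) := le_add_of_nonneg_right (gg_nonneg α β _)
      · have ha : |ξ| ^ (-α) ≤ |ξ + a| ^ (-α) :=
          Real.rpow_le_rpow_of_nonpos (abs_pos.2 hξa) h (by linarith)
        calc |ξ| ^ (-α) * (jb (ξ + a)) ^ (-β) ≤ gg α β (ξ + a) :=
              mul_le_mul_of_nonneg_right ha (Real.rpow_nonneg (jb_pos _).le _)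
          _ ≤ gg α β ξ + gg α β (ξ + a) := le_add_of_nonneg_left (gg_nonneg α β _)
    calc ENNReal.ofReal (|ξ| ^ (-α) * (jb (ξ + a)) ^ (-β))
        ≤ ENNReal.ofReal (gg α β ξ + gg α β (ξ + a)) := ENNReal.ofReal_le_ofReal key
      _ = _ := ENNReal.ofReal_add (gg_nonneg α β _) (gg_nonneg α β _)
  calc (∫⁻ ξ : ℝ, ENNReal.ofReal (|ξ| ^ (-α) * (jb (ξ + a)) ^ (-β)))
      ≤ ∫⁻ ξ : ℝ, (ENNReal.ofReal (gg α β ξ) + ENNReal.ofReal (gg α β (ξ + a))) :=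
        lintegral_mono_ae hae
    _ = J + ∫⁻ ξ : ℝ, ENNReal.ofReal (gg α β (ξ + a)) := by
        rw [lintegral_add_left (gg_meas α β)]
    _ = J + J := by
        rw [lintegral_add_right_eq_self (fun x => ENNReal.ofReal (gg α β x)) a]
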